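/- Invariant verification: let 𝒫𝒮 be a parallel event system, Init ⊆ S, I ⊆ S, and G ⊆ S × S (in particular, G may be taken as the union of the guarantee conditions of all events of 𝒫𝒮). If (i) ⊢ 𝒫𝒮 sat ⟨Init, ∅, G, UNIV⟩ is derivable in the rely-guarantee proof system, (ii) Init ⊆ I, and (iii) stable(I, G), then I is an invariant of 𝒫𝒮 with respect to Init: for every s ∈ Init, every event context x, and every computation ϖ ∈ Ψ(𝒫𝒮, s, x) having no environment transitions, every state occurring in ϖ lies in I. -/

import Mathlib

set_option autoImplicit false

namespace PiCore

/-! ## Syntax of PiCore -/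

/-- PiCore programs; `term` is the terminated program `⊥`. -/
inductive Prog (S : Type) : Type where
  | term : Prog S
  | basic : (S → S) → Prog S
  | seq : Prog S → Prog S → Prog S
  | cond : Set S → Prog S → Prog S → Prog S
  | while' : Set S → Prog S → Prog S
  | await : Set S → Prog S → Prog S
  | nondt : Set (S × S) → Prog S

/-! ## Small-step semantics of programs -/

mutual
/-- Small-step program semantics `(P, s) -c→ (P', s')`. -/
inductive PStep {S : Type} : Prog S × S → Prog S × S → Prop where
  | basic (f : S → S) (s : S) : PStep (.basic f, s) (.term, f s)
  | seq1 {P₁ : Prog S} {s s' : S} (P₂ : Prog S) :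
      PStep (P₁, s) (.term, s') → PStep (.seq P₁ P₂, s) (P₂, s')
  | seq2 {P₁ P₁' : Prog S} {s s' : S} (P₂ : Prog S) :
      PStep (P₁, s) (P₁', s') → P₁' ≠ .term → PStep (.seq P₁ P₂, s) (.seq P₁' P₂, s')
  | condT {b : Set S} {s : S} (P₁ P₂ : Prog S) : s ∈ b → PStep (.cond b P₁ P₂, s) (P₁, s)
  | condF {b : Set S} {s : S} (P₁ P₂ : Prog S) : s ∉ b → PStep (.cond b P₁ P₂, s) (P₂, s)
  | whileT {b : Set S} {s : S} (P : Prog S) : s ∈ b →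
      PStep (.while' b P, s) (.seq P (.while' b P), s)
  | whileF {b : Set S} {s : S} (P : Prog S) : s ∉ b → PStep (.while' b P, s) (.term, s)
  | await {b : Set S} {s s' : S} {P : Prog S} : s ∈ b →
      PStepStar (P, s) (.term, s') → PStep (.await b P, s) (.term, s')
  | nondt {r : Set (S × S)} {s s' : S} : (s, s') ∈ r → PStep (.nondt r, s) (.term, s')

/-- Reflexive transitive closure of `PStep`. -/
inductive PStepStar {S : Type} : Prog S × S → Prog S × S → Prop where
  | refl (c : Prog S × S) : PStepStar c c
  | step {c c' c'' : Prog S × S} : PStep c c' → PStepStar c' c'' → PStepStar c c''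
end

/-! ## Events, event systems, parallel event systems -/

/-- A basic event: a label, a guard and a body. -/
structure EvtSpec (L S : Type) : Type where
  label : L
  guard : Set S
  body : Prog S

/-- Events: basic (non-triggered) events and anonymous (triggered) events. -/
inductive Event (L S : Type) : Type where
  | basic : EvtSpec L S → Event L S
  | anony : Prog S → Event L S

/-- Event contexts. -/
abbrev EvtCtx (L S K : Type) := K → Event L S

/-- The action component of a transition label: a program action `c`
or the occurrence of an event. -/
inductive Act (L S : Type) : Type where
  | cmd : Act L S
  | evt : Event L S → Act L S

/-- Transition labels `t@κ`. -/
abbrev Lbl (L S K : Type) := Act L S × K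

/-- Configurations at the level of events. -/
abbrev EConf (L S K : Type) := Event L S × S × EvtCtx L S K

/-- Labelled transitions of events. -/
inductive EStep {L S K : Type} [DecidableEq K] :
    EConf L S K → Lbl L S K → EConf L S K → Prop where
  | anony {P P' : Prog S} {s s' : S} (x : EvtCtx L S K) (κ : K) :
      PStep (P, s) (P', s') → EStep (.anony P, s, x) (.cmd, κ) (.anony P', s', x)
  | basic (α : EvtSpec L S) {s : S} (x : EvtCtx L S K) (κ : K) : s ∈ α.guard →
      EStep (.basic α, s, x) (.evt (.basic α), κ)
        (.anony α.body, s, Function.update x κ (.basic α))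

/-- Event systems: a finite event set `{ℰ₀, …, ℰₙ}` or a sequence `EvtSeq ℰ 𝒮`. -/
inductive EvtSys (L S : Type) : Type where
  | set : (n : ℕ) → (Fin (n + 1) → Event L S) → EvtSys L S
  | seq : Event L S → EvtSys L S → EvtSys L S

/-- Configurations at the level of event systems. -/
abbrev ESConf (L S K : Type) := EvtSys L S × S × EvtCtx L S K

/-- Labelled transitions of event systems. -/
inductive ESStep {L S K : Type} [DecidableEq K] :
    ESConf L S K → Lbl L S K → ESConf L S K → Prop where
  | set {n : ℕ} {es : Fin (n + 1) → Event L S} (i : Fin (n + 1))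
      {s s' : S} {x x' : EvtCtx L S K} {e' : Event L S} {κ : K} :
      EStep (es i, s, x) (.evt (es i), κ) (e', s', x') →
      ESStep (.set n es, s, x) (.evt (es i), κ) (.seq e' (.set n es), s', x')
  | seq1 {e e' : Event L S} (𝒮 : EvtSys L S) {s s' : S} {x x' : EvtCtx L S K}
      {l : Lbl L S K} :
      EStep (e, s, x) l (e', s', x') → e' ≠ .anony .term →
      ESStep (.seq e 𝒮, s, x) l (.seq e' 𝒮, s', x')
  | seq2 {e : Event L S} (𝒮 : EvtSys L S) {s s' : S} {x x' : EvtCtx L S K}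
      {l : Lbl L S K} :
      EStep (e, s, x) l (.anony .term, s', x') →
      ESStep (.seq e 𝒮, s, x) l (𝒮, s', x')

/-- Parallel event systems. -/
abbrev PES (L S K : Type) := K → EvtSys L S

/-- Configurations at the level of parallel event systems. -/
abbrev PConf (L S K : Type) := PES L S K × S × EvtCtx L S K

/-- Labelled transitions of parallel event systems. -/
inductive PESStep {L S K : Type} [DecidableEq K] :
    PConf L S K → Lbl L S K → PConf L S K → Prop where
  | par {ps : PES L S K} {κ : K} {t : Act L S} {s s' : S} {x x' : EvtCtx L S K}
      {es' : EvtSys L S} :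
      ESStep (ps κ, s, x) (t, κ) (es', s', x') →
      PESStep (ps, s, x) (t, κ) (Function.update ps κ es', s', x')

/-! ## Computations -/

section Computation

variable {σ S X : Type}

/-- An environment transition between two configurations:
the specification component is unchanged. -/
def EnvTr (c c' : σ × S × X) : Prop := c.1 = c'.1

/-- Computations: nonempty lists of configurations in which every consecutive pair
is an environment transition or an action transition of the semantics. -/
inductive Comp (step : σ × S × X → σ × S × X → Prop) : List (σ × S × X) → Prop where
  | one (c : σ × S × X) : Comp step [c]
  | env {sp : σ} {s₁ s₂ : S} {x₁ x₂ : X} {cs : List (σ × S × X)} :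
      Comp step ((sp, s₁, x₁) :: cs) → Comp step ((sp, s₂, x₂) :: (sp, s₁, x₁) :: cs)
  | act {c c' : σ × S × X} {cs : List (σ × S × X)} :
      step c c' → Comp step (c' :: cs) → Comp step (c :: c' :: cs)

/-- `Ψ(♯, s, x)`: the computations starting in the configuration `(♯, s, x)`. -/
def cpts (step : σ × S × X → σ × S × X → Prop) (sp : σ) (s : S) (x : X) :
    Set (List (σ × S × X)) :=
  {ϖ | Comp step ϖ ∧ ϖ.head? = some (sp, s, x)}

/-- The assumption `A(pre, R)`. -/
def Assum (pre : Set S) (R : Set (S × S)) : Set (List (σ × S × X)) :=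
  {ϖ | (∀ c, ϖ.head? = some c → c.2.1 ∈ pre) ∧
    ∀ i c c', ϖ[i]? = some c → ϖ[i + 1]? = some c' → EnvTr c c' →
      (c.2.1, c'.2.1) ∈ R}

/-- The commitment `C(G, pst)` (`fin` tells when a specification is terminated). -/
def Commit (step : σ × S × X → σ × S × X → Prop) (fin : σ → Prop)
    (G : Set (S × S)) (pst : Set S) : Set (List (σ × S × X)) :=
  {ϖ | (∀ i c c', ϖ[i]? = some c → ϖ[i + 1]? = some c' → step c c' →
      (c.2.1, c'.2.1) ∈ G) ∧
    ∀ c, ϖ.getLast? = some c → fin c.1 → c.2.1 ∈ pst}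

end Computation

/-! ## Validity of rely-guarantee specifications -/

section Validity

variable {L S K : Type}

/-- Program action transitions lifted to configurations with a trivial event context. -/
def pstepL {S : Type} (c c' : Prog S × S × Unit) : Prop :=
  PStep (c.1, c.2.1) (c'.1, c'.2.1)

/-- Action transitions of events (any label). -/
def estepAny [DecidableEq K] (c c' : EConf L S K) : Prop := ∃ l, EStep c l c'

/-- Action transitions of event systems (any label). -/
def esstepAny [DecidableEq K] (c c' : ESConf L S K) : Prop := ∃ l, ESStep c l c'

/-- Action transitions of parallel event systems (any label). -/
def pesstepAny [DecidableEq K] (c c' : PConf L S K) : Prop := ∃ l, PESStep c l c'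

/-- A terminated program. -/
def progFin : Prog S → Prop := fun P => P = .term

/-- A terminated event. -/
def evtFin : Event L S → Prop := fun e => e = .anony .term

/-- Event systems have no terminated form. -/
def esysFin : EvtSys L S → Prop := fun _ => False

/-- Parallel event systems have no terminated form. -/
def pesFin : PES L S K → Prop := fun _ => False

/-- Validity `⊨ P sat ⟨pre, R, G, pst⟩` for programs. -/
def progValid (P : Prog S) (pre : Set S) (R G : Set (S × S)) (pst : Set S) : Prop :=
  ∀ s : S, cpts pstepL P s () ∩ Assum pre R ⊆ Commit pstepL progFin G pst

/-- Validity `⊨ ℰ sat ⟨pre, R, G, pst⟩` for events. -/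
def evtValid [DecidableEq K] (e : Event L S) (pre : Set S) (R G : Set (S × S))
    (pst : Set S) : Prop :=
  ∀ (s : S) (x : EvtCtx L S K),
    cpts estepAny e s x ∩ Assum pre R ⊆ Commit estepAny evtFin G pst

/-- Validity `⊨ 𝒮 sat ⟨pre, R, G, pst⟩` for event systems. -/
def esysValid [DecidableEq K] (es : EvtSys L S) (pre : Set S) (R G : Set (S × S))
    (pst : Set S) : Prop :=
  ∀ (s : S) (x : EvtCtx L S K),
    cpts esstepAny es s x ∩ Assum pre R ⊆ Commit esstepAny esysFin G pst

/-- Validity `⊨ 𝒫𝒮 sat ⟨pre, R, G, pst⟩` for parallel event systems. -/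
def pesValid [DecidableEq K] (ps : PES L S K) (pre : Set S) (R G : Set (S × S))
    (pst : Set S) : Prop :=
  ∀ (s : S) (x : EvtCtx L S K),
    cpts pesstepAny ps s x ∩ Assum pre R ⊆ Commit pesstepAny pesFin G pst

end Validity

/-! ## The rely-guarantee proof system -/

/-- Specifications: programs, events, event systems, or parallel event systems. -/
inductive Spec (L S K : Type) : Type where
  | prog : Prog S → Spec L S K
  | evt : Event L S → Spec L S K
  | esys : EvtSys L S → Spec L S K
  | pes : PES L S K → Spec L S K

/-- A specification that is not a parallel event system. -/
def Spec.noPar {L S K : Type} : Spec L S K → Prop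
  | .pes _ => False
  | _ => True

/-- Uniform validity `⊨ ♯ sat ⟨pre, R, G, pst⟩`. -/
def RGValid {L S K : Type} [DecidableEq K] :
    Spec L S K → Set S → Set (S × S) → Set (S × S) → Set S → Prop
  | .prog P, pre, R, G, pst => progValid P pre R G pst
  | .evt e, pre, R, G, pst => evtValid (K := K) e pre R G pst
  | .esys es, pre, R, G, pst => esysValid (K := K) es pre R G pst
  | .pes ps, pre, R, G, pst => pesValid ps pre R G pst

/-- `stable f g`. -/
def stable {α : Type} (f : Set α) (g : Set (α × α)) : Prop :=
  ∀ x y, x ∈ f → (x, y) ∈ g → y ∈ f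

/-- The identity relation on a state space. -/
def idRel {S : Type} : Set (S × S) := {p | p.1 = p.2}

/-- The rely-guarantee proof system `⊢ ♯ sat ⟨pre, R, G, pst⟩`. -/
inductive RGDeriv {L S K : Type} [DecidableEq K] :
    Spec L S K → Set S → Set (S × S) → Set (S × S) → Set S → Prop where
  | basic {f : S → S} {pre pst : Set S} {R G : Set (S × S)} :
      pre ⊆ {s | f s ∈ pst} →
      {p : S × S | p.1 ∈ pre ∧ p.2 = f p.1} ⊆ G →
      stable pre R → stable pst R →
      RGDeriv (.prog (.basic f)) pre R G pst
  | seq {P Q : Prog S} {pre m pst : Set S} {R G : Set (S × S)} :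
      RGDeriv (.prog P) pre R G m → RGDeriv (.prog Q) m R G pst →
      RGDeriv (.prog (.seq P Q)) pre R G pst
  | cond {b : Set S} {P₁ P₂ : Prog S} {pre pst : Set S} {R G : Set (S × S)} :
      RGDeriv (.prog P₁) (pre ∩ b) R G pst →
      RGDeriv (.prog P₂) (pre ∩ bᶜ) R G pst →
      stable pre R → idRel ⊆ G →
      RGDeriv (.prog (.cond b P₁ P₂)) pre R G pst
  | whileR {b : Set S} {P : Prog S} {pre pst : Set S} {R G : Set (S × S)} :
      RGDeriv (.prog P) (pre ∩ b) R G pre →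
      pre ∩ bᶜ ⊆ pst →
      stable pre R → stable pst R → idRel ⊆ G →
      RGDeriv (.prog (.while' b P)) pre R G pst
  | awaitR {b : Set S} {P : Prog S} {pre pst : Set S} {R G : Set (S × S)} :
      (∀ V : S, RGDeriv (.prog P) (pre ∩ b ∩ {V}) idRel Set.univ
        ({s | (V, s) ∈ G} ∩ pst)) →
      stable pre R → stable pst R →
      RGDeriv (.prog (.await b P)) pre R G pst
  | nondt {r : Set (S × S)} {pre pst : Set S} {R G : Set (S × S)} :
      pre ⊆ {s | (∀ s', (s, s') ∈ r → s' ∈ pst) ∧ ∃ s', (s, s') ∈ r} →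
      {p : S × S | p.1 ∈ pre ∧ p ∈ r} ⊆ G →
      stable pre R → stable pst R →
      RGDeriv (.prog (.nondt r)) pre R G pst
  | conseq {sp : Spec L S K} {pre pre' pst pst' : Set S} {R R' G G' : Set (S × S)} :
      sp.noPar →
      pre ⊆ pre' → R ⊆ R' → G' ⊆ G → pst' ⊆ pst →
      RGDeriv sp pre' R' G' pst' →
      RGDeriv sp pre R G pst
  | unPre {P : Prog S} {pre pre' pst : Set S} {R G : Set (S × S)} :
      RGDeriv (.prog P) pre R G pst → RGDeriv (.prog P) pre' R G pst →
      RGDeriv (.prog P) (pre ∪ pre') R G pst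
  | intPost {P : Prog S} {pre pst pst' : Set S} {R G : Set (S × S)} :
      RGDeriv (.prog P) pre R G pst → RGDeriv (.prog P) pre R G pst' →
      RGDeriv (.prog P) pre R G (pst ∩ pst')
  | univPre {P : Prog S} {pre pst : Set S} {R G : Set (S × S)} :
      (∀ v ∈ pre, RGDeriv (.prog P) {v} R G pst) →
      RGDeriv (.prog P) pre R G pst
  | emptyPre {P : Prog S} {pst : Set S} {R G : Set (S × S)} :
      RGDeriv (.prog P) ∅ R G pst
  | inner {P : Prog S} {pre pst : Set S} {R G : Set (S × S)} :
      RGDeriv (.prog P) pre R G pst →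
      RGDeriv (.evt (.anony P)) pre R G pst
  | basicEvt {α : EvtSpec L S} {pre pst : Set S} {R G : Set (S × S)} :
      RGDeriv (.prog α.body) (pre ∩ α.guard) R G pst →
      stable pre R → idRel ⊆ G →
      RGDeriv (.evt (.basic α)) pre R G pst
  | evtSeq {e : Event L S} {𝒮 : EvtSys L S} {pre m pst : Set S} {R G : Set (S × S)} :
      RGDeriv (.evt e) pre R G m → RGDeriv (.esys 𝒮) m R G pst →
      RGDeriv (.esys (.seq e 𝒮)) pre R G pst
  | evtSet {n : ℕ} {es : Fin (n + 1) → Event L S} {pre pst : Set S}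
      {R G : Set (S × S)} {pres psts : Fin (n + 1) → Set S}
      {Rs Gs : Fin (n + 1) → Set (S × S)} :
      (∀ i, RGDeriv (.evt (es i)) (pres i) (Rs i) (Gs i) (psts i)) →
      (∀ i j, psts i ⊆ pres j) →
      (∀ i, pre ⊆ pres i) → (∀ i, psts i ⊆ pst) →
      (∀ i, R ⊆ Rs i) → (∀ i, Gs i ⊆ G) →
      stable pre R → idRel ⊆ G →
      RGDeriv (.esys (.set n es)) pre R G pst
  | par {ps : PES L S K} {pre pst : Set S} {R G : Set (S × S)}
      {pres psts : K → Set S} {Rs Gs : K → Set (S × S)} :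
      (∀ κ, RGDeriv (.esys (ps κ)) (pres κ) (Rs κ) (Gs κ) (psts κ)) →
      (∀ κ, pre ⊆ pres κ) → (∀ κ, psts κ ⊆ pst) →
      (∀ κ, Gs κ ⊆ G) → (∀ κ, R ⊆ Rs κ) →
      (∀ κ κ', κ ≠ κ' → Gs κ ⊆ Rs κ') →
      RGDeriv (.pes ps) pre R G pst


/-! ## Serialization and compositionality machinery -/

/-- The set of events occurring syntactically in an event system. -/
def EvtSys.evts {L S : Type} : EvtSys L S → Set (Event L S)
  | .set _ es => Set.range es
  | .seq e 𝒮 => insert e 𝒮.evts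

/-- Similarity (simulation) of two computations, possibly over different
specification types: same length, and at each position the states and event
contexts coincide and the steps are the same labelled action transitions
(resp. environment transitions). -/
def Similar {σ₁ σ₂ S X Λ : Type}
    (st₁ : σ₁ × S × X → Λ → σ₁ × S × X → Prop)
    (st₂ : σ₂ × S × X → Λ → σ₂ × S × X → Prop)
    (w₁ : List (σ₁ × S × X)) (w₂ : List (σ₂ × S × X)) : Prop :=
  w₁.length = w₂.length ∧
  ∀ i c₁ c₁' c₂ c₂', w₁[i]? = some c₁ → w₁[i + 1]? = some c₁' →
    w₂[i]? = some c₂ → w₂[i + 1]? = some c₂' →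
    c₁.2.1 = c₂.2.1 ∧ c₁.2.2 = c₂.2.2 ∧
    (∀ δ, st₁ c₁ δ c₁' ↔ st₂ c₂ δ c₂') ∧
    (EnvTr c₁ c₁' ↔ EnvTr c₂ c₂')

/-- The computations of an event (from an arbitrary initial state and
event context). -/
def cptsOfEvt {L S K : Type} [DecidableEq K] (e : Event L S) :
    Set (List (EConf L S K)) :=
  {w | Comp estepAny w ∧ ∃ s x, w.head? = some (e, s, x)}

/-- A computation `w` of a parallel event system and a family `cf` of
computations of event systems conjoin, `w ∝ cf` (Definition 2). -/
def Conjoin {L S K : Type} [DecidableEq K] (w : List (PConf L S K))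
    (cf : K → List (ESConf L S K)) : Prop :=
  (∀ κ, (cf κ).length = w.length) ∧
  (∀ (κ : K) (j : ℕ) c c', w[j]? = some c → (cf κ)[j]? = some c' →
    c.2.1 = c'.2.1 ∧ c.2.2 = c'.2.2 ∧ c.1 κ = c'.1) ∧
  (∀ (j : ℕ) c c', w[j]? = some c → w[j + 1]? = some c' →
    (EnvTr c c' ∧
      ∀ κ d d', (cf κ)[j]? = some d → (cf κ)[j + 1]? = some d' → EnvTr d d') ∨
    (∃ (t : Act L S) (κ₁ : K), PESStep c (t, κ₁) c' ∧
      (∀ d d', (cf κ₁)[j]? = some d → (cf κ₁)[j + 1]? = some d' →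
        ESStep d (t, κ₁) d') ∧
      (∀ κ, κ ≠ κ₁ → ∀ d d', (cf κ)[j]? = some d → (cf κ)[j + 1]? = some d' →
        EnvTr d d')))

set_option maxHeartbeats 1000000
section
variable {S : Type}

theorem star_ind {motive : Prog S × S → Prog S × S → Prop}
    (refl : ∀ c, motive c c)
    (step : ∀ c c' c'', PStep c c' → PStepStar c' c'' → motive c' c'' → motive c c'')
    {c c' : Prog S × S} (h : PStepStar c c') : motive c c' := by
  refine PStepStar.rec (motive_1 := fun _ _ _ => True) (motive_2 := fun a b _ => motive a b)
    ?_ ?_ ?_ ?_ ?_ ?_ ?_ ?_ ?_ ?_ ?_ h <;> intros <;>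
    first | trivial | (apply step <;> assumption) | apply refl

theorem no_step_term {s : S} {c : Prog S × S} (h : PStep (.term, s) c) : False := by
  cases h

theorem star_term {c c' : Prog S × S} (h : PStepStar c c') : c.1 = .term → c' = c := by
  refine star_ind (motive := fun a b => a.1 = .term → b = a) (fun c _ => rfl) ?_ h
  rintro ⟨P, s⟩ c1 c2 h1 h2 ih ht
  simp only at ht; subst ht
  exact absurd h1 no_step_term

/-- Depth of `await` nesting. -/
def pdepth : Prog S → ℕ
  | .term => 0
  | .basic _ => 0
  | .nondt _ => 0
  | .seq P Q => max (pdepth P) (pdepth Q)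
  | .cond _ P Q => max (pdepth P) (pdepth Q)
  | .while' _ P => pdepth P
  | .await _ P => pdepth P + 1

theorem pdepth_step : ∀ (P : Prog S) (s : S) (P' : Prog S) (s' : S),
    PStep (P, s) (P', s') → pdepth P' ≤ pdepth P := by
  intro P
  induction P with
  | term => intro s P' s' h; exact absurd h no_step_term
  | basic f => intro s P' s' h; cases h; simp [pdepth]
  | nondt r => intro s P' s' h; cases h; simp [pdepth]
  | seq P Q ih1 ih2 =>
    intro s P' s' h
    cases h with
    | seq1 _ h1 => simp [pdepth]
    | seq2 _ h1 hne => simp only [pdepth]; exact max_le_max (ih1 _ _ _ h1) le_rfl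
  | cond b P Q ih1 ih2 =>
    intro s P' s' h
    cases h with
    | condT _ _ hb => simp [pdepth]
    | condF _ _ hb => simp [pdepth]
  | while' b P ih =>
    intro s P' s' h
    cases h with
    | whileT _ hb => simp [pdepth]
    | whileF _ hb => simp [pdepth]
  | await b P ih =>
    intro s P' s' h
    cases h with
    | await hb hstar => simp [pdepth]
end
section
variable {L S K : Type} [DecidableEq K]

theorem stable_anti {f : Set S} {g g' : Set (S × S)} (h : stable f g) (hg : g' ⊆ g) :
    stable f g' := fun x y hx hxy => h x y hx (hg hxy)

theorem term_pre_sub {sp : Spec L S K} {pre pst : Set S} {R G : Set (S × S)}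
    (h : RGDeriv sp pre R G pst) : sp = .prog .term → pre ⊆ pst := by
  induction h with
  | conseq hnp h1 h2 h3 h4 h5 ih => intro he; exact fun s hs => h4 (ih he (h1 hs))
  | unPre h1 h2 ih1 ih2 =>
    intro he s hs
    rcases hs with hs | hs
    · exact ih1 he hs
    · exact ih2 he hs
  | intPost h1 h2 ih1 ih2 => intro he s hs; exact ⟨ih1 he hs, ih2 he hs⟩
  | univPre h ih => intro he s hs; exact ih s hs he rfl
  | emptyPre => intro _ s hs; exact absurd hs (Set.notMem_empty s)
  | _ => first
      | (intro he; exact absurd he (by simp))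
      | (intro he; injection he with he'; exact absurd he' (by simp))

theorem stabilize {sp : Spec L S K} {pre pst : Set S} {R G : Set (S × S)}
    (h : RGDeriv sp pre R G pst) (hnp : sp.noPar) :
    ∀ s ∈ pre, ∃ pre', s ∈ pre' ∧ stable pre' R ∧ RGDeriv sp pre' R G pst := by
  induction h with
  | basic h1 h2 h3 h4 => exact fun s hs => ⟨_, hs, h3, .basic h1 h2 h3 h4⟩
  | seq hP hQ ihP ihQ =>
    intro s hs
    obtain ⟨pre', hs', hst, hd⟩ := ihP trivial s hs
    exact ⟨pre', hs', hst, .seq hd hQ⟩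
  | cond h1 h2 h3 h4 ih1 ih2 => exact fun s hs => ⟨_, hs, h3, .cond h1 h2 h3 h4⟩
  | whileR h1 h2 h3 h4 h5 ih => exact fun s hs => ⟨_, hs, h3, .whileR h1 h2 h3 h4 h5⟩
  | awaitR h1 h2 h3 ih => exact fun s hs => ⟨_, hs, h2, .awaitR h1 h2 h3⟩
  | nondt h1 h2 h3 h4 => exact fun s hs => ⟨_, hs, h3, .nondt h1 h2 h3 h4⟩
  | conseq hnp' h1 h2 h3 h4 h5 ih =>
    intro s hs
    obtain ⟨pre', hs', hst, hd⟩ := ih hnp' s (h1 hs)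
    exact ⟨pre', hs', stable_anti hst h2, .conseq hnp' le_rfl h2 h3 h4 hd⟩
  | unPre h1 h2 ih1 ih2 =>
    intro s hs
    rcases hs with hs | hs
    · exact ih1 trivial s hs
    · exact ih2 trivial s hs
  | intPost h1 h2 ih1 ih2 =>
    intro s hs
    obtain ⟨p1, hs1, hst1, hd1⟩ := ih1 trivial s hs
    obtain ⟨p2, hs2, hst2, hd2⟩ := ih2 trivial s hs
    refine ⟨p1 ∩ p2, ⟨hs1, hs2⟩, fun x y hx hxy => ⟨hst1 x y hx.1 hxy, hst2 x y hx.2 hxy⟩, ?_⟩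
    exact .intPost (.conseq trivial Set.inter_subset_left le_rfl le_rfl le_rfl hd1)
      (.conseq trivial Set.inter_subset_right le_rfl le_rfl le_rfl hd2)
  | univPre h ih => exact fun s hs => ih s hs trivial s rfl
  | emptyPre => exact fun s hs => absurd hs (Set.notMem_empty s)
  | inner h ih =>
    intro s hs
    obtain ⟨pre', hs', hst, hd⟩ := ih trivial s hs
    exact ⟨pre', hs', hst, .inner hd⟩
  | basicEvt h1 h2 h3 ih => exact fun s hs => ⟨_, hs, h2, .basicEvt h1 h2 h3⟩
  | evtSeq hE hS ihE ihS =>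
    intro s hs
    obtain ⟨pre', hs', hst, hd⟩ := ihE trivial s hs
    exact ⟨pre', hs', hst, .evtSeq hd hS⟩
  | evtSet h1 h2 h3 h4 h5 h6 h7 h8 ih =>
    exact fun s hs => ⟨_, hs, h7, .evtSet h1 h2 h3 h4 h5 h6 h7 h8⟩
  | par => exact absurd hnp (by simp [Spec.noPar])

end
section
variable {L S K : Type} [DecidableEq K]

/-- Result of a single program step. -/
def ProgRes (L : Type) (K : Type) [DecidableEq K] {S : Type} (P' : Prog S) (s s' : S)
    (R G : Set (S × S)) (pst : Set S) : Prop :=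
  (s, s') ∈ G ∧ (P' = .term → s' ∈ pst) ∧
    (P' ≠ .term → ∃ pre', s' ∈ pre' ∧ RGDeriv (L := L) (K := K) (.prog P') pre' R G pst)

def SingleStmt (L : Type) (K : Type) [DecidableEq K] (S : Type) (n : ℕ) : Prop :=
  ∀ (P : Prog S) (pre : Set S) (R G : Set (S × S)) (pst : Set S) (s : S) (P' : Prog S) (s' : S),
    pdepth P ≤ n → RGDeriv (L := L) (K := K) (.prog P) pre R G pst → s ∈ pre →
    PStep (P, s) (P', s') → ProgRes L K P' s s' R G pst

theorem multiAux (N : ℕ) (hs : SingleStmt L K S N) :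
    ∀ (P : Prog S) (pre : Set S) (R G : Set (S × S)) (pst : Set S) (s s' : S),
      pdepth P ≤ N → RGDeriv (L := L) (K := K) (.prog P) pre R G pst → s ∈ pre →
      PStepStar (P, s) (.term, s') → s' ∈ pst := by
  intro P pre R G pst s s' hd hder hpre hstar
  have H : ∀ c c' : Prog S × S, PStepStar c c' →
      ∀ pre, pdepth c.1 ≤ N → RGDeriv (L := L) (K := K) (.prog c.1) pre R G pst →
      c.2 ∈ pre → c'.1 = .term → c'.2 ∈ pst := by
    intro c c' h
    refine star_ind (motive := fun a b => ∀ pre, pdepth a.1 ≤ N →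
      RGDeriv (L := L) (K := K) (.prog a.1) pre R G pst → a.2 ∈ pre → b.1 = .term → b.2 ∈ pst)
      ?_ ?_ h
    · intro c pre hd hder hpre ht
      exact term_pre_sub hder (by rw [ht]) hpre
    · rintro ⟨P, s⟩ ⟨P₁, s₁⟩ c'' h1 h2 ih pre hd hder hpre ht
      obtain ⟨hG, hterm, hnon⟩ := hs P pre R G pst s P₁ s₁ hd hder hpre h1
      by_cases hP₁ : P₁ = Prog.term
      · have := star_term h2 (by simpa using hP₁)
        rw [this]
        exact hterm hP₁
      · obtain ⟨p1, hs1, hd1⟩ := hnon hP₁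
        exact ih p1 (le_trans (pdepth_step _ _ _ _ h1) hd) hd1 hs1 ht
  exact H _ _ hstar pre hd hder hpre rfl

theorem progSingleAux (n : ℕ) (SIH : ∀ m, m < n → SingleStmt L K S m)
    {sp : Spec L S K} {pre pst : Set S} {R G : Set (S × S)} (h : RGDeriv sp pre R G pst) :
    ∀ P : Prog S, sp = .prog P → pdepth P ≤ n → ∀ s P' s', s ∈ pre →
      PStep (P, s) (P', s') → ProgRes L K P' s s' R G pst := by
  induction h with
  | @basic f pre pst R G h1 h2 h3 h4 =>
    intro P heq hd s P' s' hs hstep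
    injection heq with heq; subst heq
    cases hstep
    exact ⟨h2 ⟨hs, rfl⟩, fun _ => h1 hs, fun hne => absurd rfl hne⟩
  | @seq P₁ Q pre m pst R G hP hQ ihP ihQ =>
    intro P heq hd s P' s' hs hstep
    injection heq with heq; subst heq
    cases hstep with
    | seq1 _ h1 =>
      obtain ⟨hG, ht, _⟩ := ihP P₁ rfl (le_trans (le_max_left _ _) hd) s .term s' hs h1
      have hm := ht rfl
      refine ⟨hG, fun hQt => term_pre_sub hQ (by rw [hQt]) hm, fun _ => ⟨m, hm, hQ⟩⟩
    | seq2 _ h1 hne =>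
      obtain ⟨hG, _, hnon⟩ := ihP P₁ rfl (le_trans (le_max_left _ _) hd) s _ s' hs h1
      obtain ⟨p1, hs1, hd1⟩ := hnon hne
      exact ⟨hG, fun ht => (by cases ht), fun _ => ⟨p1, hs1, .seq hd1 hQ⟩⟩
  | @cond b P₁ P₂ pre pst R G hP1 hP2 hst hid ih1 ih2 =>
    intro P heq hd s P' s' hs hstep
    injection heq with heq; subst heq
    cases hstep with
    | condT _ _ hb =>
      exact ⟨hid rfl, fun ht => term_pre_sub hP1 (by rw [ht]) ⟨hs, hb⟩,
        fun _ => ⟨pre ∩ b, ⟨hs, hb⟩, hP1⟩⟩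
    | condF _ _ hb =>
      exact ⟨hid rfl, fun ht => term_pre_sub hP2 (by rw [ht]) ⟨hs, hb⟩,
        fun _ => ⟨pre ∩ bᶜ, ⟨hs, hb⟩, hP2⟩⟩
  | @whileR b Pb pre pst R G hP hsub hst1 hst2 hid ih =>
    intro P heq hd s P' s' hs hstep
    injection heq with heq; subst heq
    cases hstep with
    | whileT _ hb =>
      exact ⟨hid rfl, fun ht => (by cases ht),
        fun _ => ⟨pre ∩ b, ⟨hs, hb⟩, .seq hP (.whileR hP hsub hst1 hst2 hid)⟩⟩
    | whileF _ hb =>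
      exact ⟨hid rfl, fun _ => hsub ⟨hs, hb⟩, fun hne => absurd rfl hne⟩
  | @awaitR b Pb pre pst R G hV hst1 hst2 ihV =>
    intro P heq hd s P' s' hs hstep
    injection heq with heq; subst heq
    cases hstep with
    | await hb hstar =>
      have hdP : pdepth Pb < n := by
        simp only [pdepth] at hd; omega
      have hm := multiAux (pdepth Pb) (SIH (pdepth Pb) hdP) Pb _ _ _ _ s s' le_rfl (hV s)
        ⟨⟨hs, hb⟩, rfl⟩ hstar
      exact ⟨hm.1, fun _ => hm.2, fun hne => absurd rfl hne⟩
  | @nondt r pre pst R G h1 h2 h3 h4 =>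
    intro P heq hd s P' s' hs hstep
    injection heq with heq; subst heq
    cases hstep with
    | nondt hr => exact ⟨h2 ⟨hs, hr⟩, fun _ => (h1 hs).1 _ hr, fun hne => absurd rfl hne⟩
  | conseq hnp h1 h2 h3 h4 h5 ih =>
    intro P heq hd s P' s' hs hstep
    obtain ⟨hG, ht, hnon⟩ := ih P heq hd s P' s' (h1 hs) hstep
    refine ⟨h3 hG, fun h' => h4 (ht h'), fun hne => ?_⟩
    obtain ⟨p, hp, hd'⟩ := hnon hne
    exact ⟨p, hp, .conseq trivial le_rfl h2 h3 h4 hd'⟩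
  | unPre h1 h2 ih1 ih2 =>
    intro P heq hd s P' s' hs hstep
    rcases hs with hs | hs
    · exact ih1 P heq hd s P' s' hs hstep
    · exact ih2 P heq hd s P' s' hs hstep
  | intPost h1 h2 ih1 ih2 =>
    intro P heq hd s P' s' hs hstep
    obtain ⟨hG, ht1, hnon1⟩ := ih1 P heq hd s P' s' hs hstep
    obtain ⟨_, ht2, hnon2⟩ := ih2 P heq hd s P' s' hs hstep
    refine ⟨hG, fun h' => ⟨ht1 h', ht2 h'⟩, fun hne => ?_⟩
    obtain ⟨p1, hp1, hd1⟩ := hnon1 hne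
    obtain ⟨p2, hp2, hd2⟩ := hnon2 hne
    exact ⟨p1 ∩ p2, ⟨hp1, hp2⟩,
      .intPost (.conseq trivial Set.inter_subset_left le_rfl le_rfl le_rfl hd1)
        (.conseq trivial Set.inter_subset_right le_rfl le_rfl le_rfl hd2)⟩
  | univPre h ih =>
    intro P heq hd s P' s' hs hstep
    exact ih s hs P heq hd s P' s' rfl hstep
  | emptyPre =>
    intro P heq hd s P' s' hs hstep
    exact absurd hs (Set.notMem_empty s)
  | inner h ih => intro P heq; cases heq
  | basicEvt h1 h2 h3 ih => intro P heq; cases heq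
  | evtSeq hE hS ihE ihS => intro P heq; cases heq
  | evtSet h1 h2 h3 h4 h5 h6 h7 h8 ih => intro P heq; cases heq
  | par h1 h2 h3 h4 h5 h6 ih => intro P heq; cases heq

theorem progSingle (n : ℕ) : SingleStmt L K S n := by
  induction n using Nat.strong_induction_on with
  | _ n SIH =>
    intro P pre R G pst s P' s' hd hder hs hstep
    exact progSingleAux n SIH hder P rfl hd s P' s' hs hstep

theorem progStep {P : Prog S} {pre pst : Set S} {R G : Set (S × S)} {s : S} {P' : Prog S}
    {s' : S} (hder : RGDeriv (L := L) (K := K) (.prog P) pre R G pst) (hs : s ∈ pre)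
    (hstep : PStep (P, s) (P', s')) : ProgRes L K P' s s' R G pst :=
  progSingle (pdepth P) P pre R G pst s P' s' le_rfl hder hs hstep

end
section
variable {L S K : Type} [DecidableEq K]

def EvtRes (K : Type) [DecidableEq K] {L S : Type} (e' : Event L S) (s s' : S)
    (R G : Set (S × S)) (pst : Set S) : Prop :=
  (s, s') ∈ G ∧ (e' = .anony .term → s' ∈ pst) ∧
    (e' ≠ .anony .term → ∃ pre', s' ∈ pre' ∧ RGDeriv (K := K) (.evt e') pre' R G pst)

theorem evtSingleAux {sp : Spec L S K} {pre pst : Set S} {R G : Set (S × S)}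
    (h : RGDeriv sp pre R G pst) :
    ∀ e, sp = .evt e → ∀ (s : S) (x : EvtCtx L S K) (l : Lbl L S K) e' s' x', s ∈ pre →
      EStep (e, s, x) l (e', s', x') → EvtRes K e' s s' R G pst := by
  induction h with
  | inner h ih =>
    intro e heq s x l e' s' x' hs hstep
    injection heq with heq; subst heq
    cases hstep with
    | anony _ _ hp =>
      obtain ⟨hG, ht, hnon⟩ := progStep h hs hp
      refine ⟨hG, fun h' => ?_, fun hne => ?_⟩
      · injection h' with h'; exact ht h'
      · obtain ⟨p, hp', hd⟩ := hnon (fun hh => hne (by rw [hh]))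
        exact ⟨p, hp', .inner hd⟩
  | @basicEvt α pre pst R G h1 h2 h3 ih =>
    intro e heq s x l e' s' x' hs hstep
    injection heq with heq; subst heq
    cases hstep with
    | basic _ _ _ hg =>
      refine ⟨h3 rfl, fun h' => ?_, fun hne => ⟨pre ∩ α.guard, ⟨hs, hg⟩, .inner h1⟩⟩
      injection h' with h'
      exact term_pre_sub h1 (by rw [h']) ⟨hs, hg⟩
  | conseq hnp h1 h2 h3 h4 h5 ih =>
    intro e heq s x l e' s' x' hs hstep
    obtain ⟨hG, ht, hnon⟩ := ih e heq s x l e' s' x' (h1 hs) hstep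
    refine ⟨h3 hG, fun h' => h4 (ht h'), fun hne => ?_⟩
    obtain ⟨p, hp, hd⟩ := hnon hne
    exact ⟨p, hp, .conseq trivial le_rfl h2 h3 h4 hd⟩
  | basic h1 h2 h3 h4 => intro e heq; cases heq
  | seq hP hQ ihP ihQ => intro e heq; cases heq
  | cond h1 h2 h3 h4 ih1 ih2 => intro e heq; cases heq
  | whileR h1 h2 h3 h4 h5 ih => intro e heq; cases heq
  | awaitR h1 h2 h3 ih => intro e heq; cases heq
  | nondt h1 h2 h3 h4 => intro e heq; cases heq
  | unPre h1 h2 ih1 ih2 => intro e heq; cases heq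
  | intPost h1 h2 ih1 ih2 => intro e heq; cases heq
  | univPre h ih => intro e heq; cases heq
  | emptyPre => intro e heq; cases heq
  | evtSeq hE hS ihE ihS => intro e heq; cases heq
  | evtSet h1 h2 h3 h4 h5 h6 h7 h8 ih => intro e heq; cases heq
  | par h1 h2 h3 h4 h5 h6 ih => intro e heq; cases heq

theorem evtStep {e : Event L S} {pre pst : Set S} {R G : Set (S × S)} {s : S}
    {x : EvtCtx L S K} {l : Lbl L S K} {e' : Event L S} {s' : S} {x' : EvtCtx L S K}
    (hder : RGDeriv (K := K) (.evt e) pre R G pst) (hs : s ∈ pre)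
    (hstep : EStep (e, s, x) l (e', s', x')) : EvtRes K e' s s' R G pst :=
  evtSingleAux hder e rfl s x l e' s' x' hs hstep

end
/-- A semantic "good configuration" invariant for event systems. -/
inductive ESGood (K : Type) [DecidableEq K] {L S : Type} (R G : Set (S × S)) :
    EvtSys L S → S → Prop where
  | set {n : ℕ} {es : Fin (n + 1) → Event L S} {pres psts cur : Fin (n + 1) → Set S}
      {Rs Gs : Fin (n + 1) → Set (S × S)} {σ : S} :
      (∀ i, RGDeriv (K := K) (.evt (es i)) (pres i) (Rs i) (Gs i) (psts i)) →
      (∀ i j, psts i ⊆ pres j) →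
      (∀ i, R ⊆ Rs i) → (∀ i, Gs i ⊆ G) →
      (∀ i, RGDeriv (K := K) (.evt (es i)) (cur i) (Rs i) (Gs i) (psts i)) →
      (∀ i, stable (cur i) R) → (∀ i, σ ∈ cur i) →
      ESGood K R G (.set n es) σ
  | seq {e : Event L S} {𝒮 : EvtSys L S} {pre' m : Set S} {σ : S} :
      σ ∈ pre' → stable pre' R → RGDeriv (K := K) (.evt e) pre' R G m →
      (∀ σ' ∈ m, ESGood K R G 𝒮 σ') →
      ESGood K R G (.seq e 𝒮) σ
  | stuck {𝒮 : EvtSys L S} {σ : S} : ESGood K R G (.seq (.anony .term) 𝒮) σ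

section
variable {L S K : Type} [DecidableEq K]

theorem esgood_env {R G : Set (S × S)} {es : EvtSys L S} {σ σ' : S}
    (h : ESGood K R G es σ) (hR : (σ, σ') ∈ R) : ESGood K R G es σ' := by
  cases h with
  | set h1 h2 h3 h4 h5 h6 h7 => exact .set h1 h2 h3 h4 h5 h6 (fun i => h6 i _ _ (h7 i) hR)
  | seq hσ hst hd hcont => exact .seq (hst _ _ hσ hR) hst hd hcont
  | stuck => exact .stuck

theorem esgood_mono {R R' G G' : Set (S × S)} {es : EvtSys L S} {σ : S}
    (h : ESGood K R' G' es σ) (hR : R ⊆ R') (hG : G' ⊆ G) : ESGood K R G es σ := by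
  induction h with
  | set h1 h2 h3 h4 h5 h6 h7 =>
    exact .set h1 h2 (fun i => hR.trans (h3 i)) (fun i => (h4 i).trans hG) h5
      (fun i => stable_anti (h6 i) hR) h7
  | seq hσ hst hd hcont ih =>
    exact .seq hσ (stable_anti hst hR) (.conseq trivial le_rfl hR hG le_rfl hd) ih
  | stuck => exact .stuck

theorem esgood_step {R G : Set (S × S)} {es es' : EvtSys L S} {σ σ' : S}
    {x x' : EvtCtx L S K} {l : Lbl L S K}
    (h : ESGood K R G es σ) (hstep : ESStep (es, σ, x) l (es', σ', x')) :
    (σ, σ') ∈ G ∧ ESGood K R G es' σ' := by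
  cases h with
  | @set n es0 pres psts cur Rs Gs _ h1 h2 h3 h4 h5 h6 h7 =>
    cases hstep with
    | set i he =>
      rename_i e'' κ0
      obtain ⟨hG', ht, hnon⟩ := evtStep (h5 i) (h7 i) he
      refine ⟨h4 i hG', ?_⟩
      by_cases hterm : e'' = Event.anony Prog.term
      · rw [hterm]; exact .stuck
      · obtain ⟨p, hp, hd⟩ := hnon hterm
        have hd2 : RGDeriv (K := K) (.evt _) p R G (psts i) :=
          .conseq trivial le_rfl (h3 i) (h4 i) le_rfl hd
        obtain ⟨p', hp', hst', hd'⟩ := stabilize hd2 trivial σ' hp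
        refine .seq hp' hst' hd' ?_
        intro σ'' hσ''
        choose cur' hmem hstab hder using fun j => stabilize (h1 j) trivial σ'' (h2 i j hσ'')
        exact .set h1 h2 h3 h4 hder (fun j => stable_anti (hstab j) (h3 j)) hmem
  | seq hσ hst hd hcont =>
    cases hstep with
    | seq1 𝒮 he hne =>
      obtain ⟨hG', ht, hnon⟩ := evtStep hd hσ he
      obtain ⟨p, hp, hd2⟩ := hnon hne
      obtain ⟨p', hp', hst', hd'⟩ := stabilize hd2 trivial σ' hp
      exact ⟨hG', .seq hp' hst' hd' hcont⟩
    | seq2 𝒮 he =>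
      obtain ⟨hG', ht, hnon⟩ := evtStep hd hσ he
      exact ⟨hG', hcont σ' (ht rfl)⟩
  | stuck =>
    cases hstep with
    | seq1 𝒮 he hne => cases he with | anony _ _ hp => exact absurd hp no_step_term
    | seq2 𝒮 he => cases he with | anony _ _ hp => exact absurd hp no_step_term

theorem esgood_init {sp : Spec L S K} {pre pst : Set S} {R G : Set (S × S)}
    (h : RGDeriv sp pre R G pst) :
    ∀ es : EvtSys L S, sp = .esys es → ∀ σ ∈ pre, ESGood K R G es σ := by
  induction h with
  | evtSeq hE hS ihE ihS =>
    intro es heq σ hσ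
    injection heq with heq; subst heq
    obtain ⟨p', hp', hst, hd⟩ := stabilize hE trivial σ hσ
    exact .seq hp' hst hd (fun σ' hσ' => ihS _ rfl σ' hσ')
  | evtSet h1 h2 h3 h4 h5 h6 h7 h8 ih =>
    intro es heq σ hσ
    injection heq with heq; subst heq
    choose cur' hmem hstab hder using fun i => stabilize (h1 i) trivial σ (h3 i hσ)
    exact .set h1 h2 h5 h6 hder (fun i => stable_anti (hstab i) (h5 i)) hmem
  | conseq hnp h1 h2 h3 h4 h5 ih =>
    intro es heq σ hσ
    exact esgood_mono (ih es heq σ (h1 hσ)) h2 h3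
  | basic h1 h2 h3 h4 => intro es heq; cases heq
  | seq hP hQ ihP ihQ => intro es heq; cases heq
  | cond h1 h2 h3 h4 ih1 ih2 => intro es heq; cases heq
  | whileR h1 h2 h3 h4 h5 ih => intro es heq; cases heq
  | awaitR h1 h2 h3 ih => intro es heq; cases heq
  | nondt h1 h2 h3 h4 => intro es heq; cases heq
  | unPre h1 h2 ih1 ih2 => intro es heq; cases heq
  | intPost h1 h2 ih1 ih2 => intro es heq; cases heq
  | univPre h ih => intro es heq; cases heq
  | emptyPre => intro es heq; cases heq
  | inner h ih => intro es heq; cases heq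
  | basicEvt h1 h2 h3 ih => intro es heq; cases heq
  | par h1 h2 h3 h4 h5 h6 ih => intro es heq; cases heq

end

/-- **Invariant verification**: if `⊢ 𝒫𝒮 sat ⟨Init, ∅, G, UNIV⟩`, `Init ⊆ I`
and `stable I G`, then `I` is an invariant of `𝒫𝒮` w.r.t. `Init`: every state
of every environment-transition-free computation of `𝒫𝒮` starting in `Init`
lies in `I`. -/
theorem invariant_verification {L S K : Type} [DecidableEq K]
    (PS : PES L S K) (Init I : Set S) (G : Set (S × S))
    (h1 : RGDeriv (Spec.pes PS) Init (∅ : Set (S × S)) G (Set.univ : Set S))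
    (h2 : Init ⊆ I) (h3 : stable I G) :
    ∀ s ∈ Init, ∀ (x : EvtCtx L S K), ∀ ϖ ∈ cpts pesstepAny PS s x,
      (∀ (i : ℕ) c c', ϖ[i]? = some c → ϖ[i + 1]? = some c' → ¬ EnvTr c c') →
      ∀ (i : ℕ) c, ϖ[i]? = some c → c.2.1 ∈ I := by
  cases h1 with
  | conseq hnp => exact hnp.elim
  | @par _ _ _ _ _ pres psts Rs Gs hder hpre hpst hG hR hGR =>
    have key : ∀ w : List (PConf L S K), Comp pesstepAny w →
        ∀ cur σ x, w.head? = some (cur, σ, x) → σ ∈ I →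
        (∀ κ, ESGood K (Rs κ) (Gs κ) (cur κ) σ) →
        (∀ (i : ℕ) c c', w[i]? = some c → w[i + 1]? = some c' → ¬ EnvTr c c') →
        ∀ (i : ℕ) c, w[i]? = some c → c.2.1 ∈ I := by
      intro w hw
      induction hw with
      | one c =>
        intro cur σ x hhead hI hgood hnoenv i c0 hc0
        cases i with
        | zero =>
          simp only [List.head?] at hhead
          injection hhead with hhead
          simp only [List.getElem?_cons_zero] at hc0
          injection hc0 with hc0
          subst hhead; rw [← hc0]; exact hI
        | succ n => simp at hc0
      | @env sp s₁ s₂ x₁ x₂ cs hcomp ih =>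
        intro cur σ x hhead hI hgood hnoenv
        exact absurd (show EnvTr (sp, s₂, x₂) (sp, s₁, x₁) from rfl)
          (hnoenv 0 _ _ (by simp) (by simp))
      | @act c c' cs hstep hcomp ih =>
        intro cur σ x hhead hI hgood hnoenv
        simp only [List.head?] at hhead
        injection hhead with hhead
        subst hhead
        obtain ⟨l, hp⟩ := hstep
        cases hp with
        | @par _ κ t _ s' _ x0' es' hes =>
          obtain ⟨hGstep, hgood'⟩ := esgood_step (hgood κ) hes
          have hI' : s' ∈ I := h3 σ s' hI (hG κ hGstep)
          have hgood'' : ∀ κ', ESGood K (Rs κ') (Gs κ')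
              (Function.update cur κ es' κ') s' := by
            intro κ'
            by_cases hk : κ' = κ
            · subst hk; rw [Function.update_self]; exact hgood'
            · rw [Function.update_of_ne hk]
              exact esgood_env (hgood κ') (hGR κ κ' (Ne.symm hk) hGstep)
          intro i c0 hc0
          cases i with
          | zero =>
            simp only [List.getElem?_cons_zero] at hc0
            injection hc0 with hc0
            rw [← hc0]; exact hI
          | succ n =>
            refine ih _ s' x0' rfl hI' hgood'' ?_ n c0 (by simpa using hc0)
            intro i c c' hcc hcc'
            exact hnoenv (i + 1) c c' (by simpa using hcc) (by simpa using hcc')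
    intro s hs x ϖ hϖ hnoenv i c hc
    obtain ⟨hcomp, hhead⟩ := hϖ
    exact key ϖ hcomp PS s x hhead (h2 hs)
      (fun κ => esgood_init (hder κ) (PS κ) rfl s (hpre κ hs)) hnoenv i c hc

end PiCore
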